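/- For all λ > 0, μ > 0 and every integer k ≥ 1, the mean first-crossing time of the iterated Poisson process through the constant boundary k equals ∫_0^∞ P_{k-1}(t) dt = (1/(λ(1-e^{-μ}))) · [1 + Σ_{i=1}^{k-1} (i!/(e^{μ}-1)^i) Σ_{j=i}^{k-1} S_2(j,i) μ^j/j!] (for k = 1 the sum over i is empty and the mean is 1/(λ(1-e^{-μ}))). -/

import Mathlib

open scoped BigOperators
open Filter MeasureTheory

/-- Bell polynomial: `B n x = e^{-x} * Σ_{k=0}^∞ k^n x^k / k!` (n-th moment of Poisson(x)). -/
noncomputable def bell (n : ℕ) (x : ℝ) : ℝ :=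
  Real.exp (-x) * ∑' k : ℕ, (k : ℝ) ^ n * x ^ k / (Nat.factorial k : ℝ)

/-- pmf of the iterated Poisson process:
`p_m(t) = e^{-λt(1-e^{-μ})} (μ^m/m!) B_m(λ t e^{-μ})`. -/
noncomputable def iterP (lam mu t : ℝ) (m : ℕ) : ℝ :=
  Real.exp (-lam * t * (1 - Real.exp (-mu))) * (mu ^ m / (Nat.factorial m : ℝ)) *
    bell m (lam * t * Real.exp (-mu))

/-- Stirling numbers of the second kind:
`S2 n k = (1/k!) Σ_{i=0}^k (-1)^i C(k,i) (k-i)^n`. -/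
noncomputable def S2 (n k : ℕ) : ℝ :=
  (1 / (Nat.factorial k : ℝ)) * ∑ i ∈ Finset.range (k + 1),
    (-1 : ℝ) ^ i * (Nat.choose k i : ℝ) * ((k - i : ℕ) : ℝ) ^ n

/-! ### Auxiliary development: Stirling numbers via recurrence -/

/-- Stirling numbers of the second kind via the standard recurrence. -/
def st : ℕ → ℕ → ℕ
  | 0, 0 => 1
  | 0, _+1 => 0
  | _+1, 0 => 0
  | n+1, k+1 => (k+1) * st n (k+1) + st n k

lemma st_eq_zero_of_lt : ∀ {n k : ℕ}, n < k → st n k = 0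
  | 0, k+1, _ => rfl
  | n+1, k+1, h => by
      have h1 : n < k + 1 := by omega
      have h2 : n < k := by omega
      simp [st, st_eq_zero_of_lt h1, st_eq_zero_of_lt h2]

lemma pow_eq_sum_st (n k : ℕ) :
    k ^ n = ∑ i ∈ Finset.range (n + 1), st n i * k.descFactorial i := by
  induction n with
  | zero => simp [st]
  | succ n ih =>
    have key : ∀ i, k.descFactorial i * k = k.descFactorial (i+1) + i * k.descFactorial i := by
      intro i
      rcases le_or_gt i k with h | h
      · rw [Nat.descFactorial_succ]
        have : (k - i) + i = k := by omega
        calc k.descFactorial i * k = k.descFactorial i * ((k - i) + i) := by rw [this]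
        _ = (k - i) * k.descFactorial i + i * k.descFactorial i := by ring
      · rw [Nat.descFactorial_eq_zero_iff_lt.2 h,
          Nat.descFactorial_eq_zero_iff_lt.2 (by omega : k < i + 1)]
        simp
    calc k ^ (n+1) = (∑ i ∈ Finset.range (n + 1), st n i * k.descFactorial i) * k := by
          rw [pow_succ, ih]
      _ = ∑ i ∈ Finset.range (n + 1), st n i * (k.descFactorial (i+1) + i * k.descFactorial i) := by
          rw [Finset.sum_mul]; exact Finset.sum_congr rfl fun i _ => by rw [mul_assoc, key]
      _ = ∑ i ∈ Finset.range (n + 1), st n i * k.descFactorial (i+1)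
            + ∑ i ∈ Finset.range (n + 1), i * st n i * k.descFactorial i := by
          rw [← Finset.sum_add_distrib]
          exact Finset.sum_congr rfl fun i _ => by ring
      _ = ∑ i ∈ Finset.range (n + 1), st n i * k.descFactorial (i+1)
            + ∑ i ∈ Finset.range (n + 1), (i+1) * st n (i+1) * k.descFactorial (i+1) := by
          congr 1
          · rw [Finset.sum_range_succ' (fun i => i * st n i * k.descFactorial i)]
            rw [Finset.sum_range_succ]
            simp [st_eq_zero_of_lt (Nat.lt_succ_self n)]
      _ = ∑ i ∈ Finset.range (n + 1), st (n+1) (i+1) * k.descFactorial (i+1) := by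
          rw [← Finset.sum_add_distrib]
          exact Finset.sum_congr rfl fun i _ => by simp [st]; ring
      _ = ∑ i ∈ Finset.range (n + 2), st (n+1) i * k.descFactorial i := by
          rw [Finset.sum_range_succ' (fun i => st (n+1) i * k.descFactorial i)]
          simp [st]

lemma A_eq : ∀ (n k : ℕ),
    (∑ i ∈ Finset.range (k + 1),
      (-1 : ℝ) ^ i * (Nat.choose k i : ℝ) * ((k - i : ℕ) : ℝ) ^ n)
      = (Nat.factorial k : ℝ) * st n k := by
  intro n
  induction n with
  | zero =>
    intro k
    have h := Int.alternating_sum_range_choose (n := k)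
    have h' : (∑ i ∈ Finset.range (k + 1), (-1 : ℝ) ^ i * (Nat.choose k i : ℝ))
        = if k = 0 then 1 else 0 := by
      have := congrArg (fun z : ℤ => (z : ℝ)) h
      push_cast at this
      simpa using this
    simp only [pow_zero, mul_one]
    rw [h']
    rcases k with _ | k
    · simp [st]
    · simp [st]
  | succ n ih =>
    intro k
    rcases k with _ | k
    · simp [st]
    · have cast_sub : ∀ i ∈ Finset.range (k + 2),
          ((k + 1 - i : ℕ) : ℝ) = ((k:ℝ) + 1) - (i : ℝ) := by
        intro i hi
        rw [Finset.mem_range] at hi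
        have : i ≤ k + 1 := by omega
        push_cast [Nat.cast_sub this]
        ring
      have split : (∑ i ∈ Finset.range (k + 2),
          (-1 : ℝ) ^ i * (Nat.choose (k+1) i : ℝ) * ((k + 1 - i : ℕ) : ℝ) ^ (n+1))
          = ((k:ℝ)+1) * (∑ i ∈ Finset.range (k + 2),
              (-1 : ℝ) ^ i * (Nat.choose (k+1) i : ℝ) * ((k + 1 - i : ℕ) : ℝ) ^ n)
            - ∑ i ∈ Finset.range (k + 2),
              (i:ℝ) * ((-1 : ℝ) ^ i * (Nat.choose (k+1) i : ℝ) * ((k + 1 - i : ℕ) : ℝ) ^ n) := by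
        rw [Finset.mul_sum, ← Finset.sum_sub_distrib]
        refine Finset.sum_congr rfl fun i hi => ?_
        rw [pow_succ]
        rw [cast_sub i hi]
        ring
      have second : (∑ i ∈ Finset.range (k + 2),
            (i:ℝ) * ((-1 : ℝ) ^ i * (Nat.choose (k+1) i : ℝ) * ((k + 1 - i : ℕ) : ℝ) ^ n))
          = -((k:ℝ)+1) * ∑ j ∈ Finset.range (k + 1),
              (-1 : ℝ) ^ j * (Nat.choose k j : ℝ) * ((k - j : ℕ) : ℝ) ^ n := by
        rw [Finset.sum_range_succ' (fun i => (i:ℝ) * ((-1 : ℝ) ^ i * (Nat.choose (k+1) i : ℝ) * ((k + 1 - i : ℕ) : ℝ) ^ n))]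
        simp only [Nat.cast_zero, zero_mul, add_zero]
        rw [Finset.mul_sum]
        refine Finset.sum_congr rfl fun j hj => ?_
        have hch : (j+1) * Nat.choose (k+1) (j+1) = (k+1) * Nat.choose k j := by
          simpa [Nat.succ_eq_add_one, mul_comm] using (Nat.add_one_mul_choose_eq k j).symm
        have hch' : ((j:ℝ)+1) * (Nat.choose (k+1) (j+1) : ℝ) = ((k:ℝ)+1) * (Nat.choose k j : ℝ) := by
          have := congrArg (fun z : ℕ => (z : ℝ)) hch
          push_cast at this
          linarith [this]
        have : (k + 1 - (j+1) : ℕ) = (k - j : ℕ) := by omega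
        rw [this, pow_succ]
        push_cast
        linear_combination (-(-1:ℝ)^j * ((k-j:ℕ):ℝ)^n) * hch'
      rw [split, second, ih (k+1), ih k]
      show _ = (Nat.factorial (k+1) : ℝ) * ((k+1) * st n (k+1) + st n k : ℕ)
      push_cast [Nat.factorial_succ]
      ring

lemma S2_eq_st (n k : ℕ) : S2 n k = (st n k : ℝ) := by
  rw [S2, A_eq]
  have : (Nat.factorial k : ℝ) ≠ 0 := Nat.cast_ne_zero.2 (Nat.factorial_ne_zero k)
  field_simp

/-! ### Bell polynomial as a finite sum -/

lemma exp_tsum (x : ℝ) : Real.exp x = ∑' k : ℕ, x ^ k / (Nat.factorial k : ℝ) := by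
  rw [Real.exp_eq_exp_ℝ, NormedSpace.exp_eq_tsum_div]

lemma desc_term (i : ℕ) (x : ℝ) :
    ∀ k, ((Nat.descFactorial (k + i) i : ℕ) : ℝ) * x ^ (k + i) / (Nat.factorial (k + i) : ℝ)
      = x ^ i * (x ^ k / (Nat.factorial k : ℝ)) := by
  intro k
  have hfac : (Nat.factorial k) * Nat.descFactorial (k + i) i = Nat.factorial (k + i) := by
    have h := Nat.factorial_mul_descFactorial (n := k + i) (k := i) (by omega)
    simpa [Nat.add_sub_cancel] using h
  have hfac' : ((Nat.descFactorial (k + i) i : ℕ) : ℝ)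
      = (Nat.factorial (k + i) : ℝ) / (Nat.factorial k : ℝ) := by
    rw [eq_div_iff (by exact_mod_cast Nat.factorial_ne_zero k)]
    exact_mod_cast (mul_comm (Nat.factorial k) _ ▸ hfac)
  rw [hfac', pow_add]
  have h1 : (Nat.factorial (k + i) : ℝ) ≠ 0 := by exact_mod_cast Nat.factorial_ne_zero _
  have h2 : (Nat.factorial k : ℝ) ≠ 0 := by exact_mod_cast Nat.factorial_ne_zero _
  field_simp

lemma summable_desc (i : ℕ) (x : ℝ) :
    Summable (fun k : ℕ => ((Nat.descFactorial k i : ℕ) : ℝ) * x ^ k / (Nat.factorial k : ℝ)) := by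
  rw [← summable_nat_add_iff i]
  have : (fun k : ℕ => ((Nat.descFactorial (k + i) i : ℕ) : ℝ) * x ^ (k + i) / (Nat.factorial (k + i) : ℝ))
      = fun k => x ^ i * (x ^ k / (Nat.factorial k : ℝ)) := funext (desc_term i x)
  rw [this]
  exact (Real.summable_pow_div_factorial x).mul_left _

lemma tsum_desc (i : ℕ) (x : ℝ) :
    (∑' k : ℕ, ((Nat.descFactorial k i : ℕ) : ℝ) * x ^ k / (Nat.factorial k : ℝ))
      = x ^ i * Real.exp x := by
  have hs := summable_desc i x
  rw [← hs.sum_add_tsum_nat_add i]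
  have h0 : (∑ j ∈ Finset.range i, ((Nat.descFactorial j i : ℕ) : ℝ) * x ^ j / (Nat.factorial j : ℝ)) = 0 := by
    apply Finset.sum_eq_zero
    intro j hj
    rw [Finset.mem_range] at hj
    rw [Nat.descFactorial_eq_zero_iff_lt.2 hj]
    simp
  rw [h0, zero_add]
  have : (fun k : ℕ => ((Nat.descFactorial (k + i) i : ℕ) : ℝ) * x ^ (k + i) / (Nat.factorial (k + i) : ℝ))
      = fun k => x ^ i * (x ^ k / (Nat.factorial k : ℝ)) := funext (desc_term i x)
  rw [this, tsum_mul_left, ← exp_tsum]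

lemma bell_eq (n : ℕ) (x : ℝ) :
    bell n x = ∑ i ∈ Finset.range (n + 1), (st n i : ℝ) * x ^ i := by
  rw [bell]
  have hterm : ∀ k : ℕ, (k : ℝ) ^ n * x ^ k / (Nat.factorial k : ℝ)
      = ∑ i ∈ Finset.range (n + 1),
          (st n i : ℝ) * (((Nat.descFactorial k i : ℕ) : ℝ) * x ^ k / (Nat.factorial k : ℝ)) := by
    intro k
    have h := pow_eq_sum_st n k
    have h' : ((k : ℝ)) ^ n = ∑ i ∈ Finset.range (n + 1), (st n i : ℝ) * ((Nat.descFactorial k i : ℕ) : ℝ) := by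
      exact_mod_cast congrArg (fun z : ℕ => (z : ℝ)) h
    rw [h', Finset.sum_mul, Finset.sum_div]
    exact Finset.sum_congr rfl fun i _ => by ring
  rw [tsum_congr hterm, Summable.tsum_finsetSum (fun i _ => ((summable_desc i x).mul_left _))]
  have : ∀ i ∈ Finset.range (n+1),
      (∑' k : ℕ, (st n i : ℝ) * (((Nat.descFactorial k i : ℕ) : ℝ) * x ^ k / (Nat.factorial k : ℝ)))
        = (st n i : ℝ) * (x ^ i * Real.exp x) := by
    intro i _
    rw [tsum_mul_left, tsum_desc]
  rw [Finset.sum_congr rfl this, Finset.mul_sum]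
  refine Finset.sum_congr rfl fun i _ => ?_
  rw [show Real.exp (-x) * ((st n i:ℝ) * (x^i * Real.exp x))
      = (st n i:ℝ) * x^i * (Real.exp (-x) * Real.exp x) by ring,
    ← Real.exp_add, neg_add_cancel, Real.exp_zero, mul_one]

/-! ### Integrals -/

lemma integrable_pow_exp {a : ℝ} (ha : 0 < a) (i : ℕ) :
    IntegrableOn (fun t : ℝ => t ^ i * Real.exp (-(a * t))) (Set.Ioi 0) := by
  have h := integrableOn_rpow_mul_exp_neg_mul_rpow (s := (i:ℝ)) (p := 1) (b := a)
    (neg_one_lt_zero.trans_le (Nat.cast_nonneg i)) one_pos ha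
  have : (fun x : ℝ => x ^ (i:ℝ) * Real.exp (-a * x ^ (1:ℝ)))
      = fun t : ℝ => t ^ i * Real.exp (-(a * t)) := by
    funext x
    rw [Real.rpow_natCast, Real.rpow_one, neg_mul]
  rwa [this] at h

lemma integral_pow_exp {a : ℝ} (ha : 0 < a) (i : ℕ) :
    ∫ t in Set.Ioi (0:ℝ), t ^ i * Real.exp (-(a * t))
      = (Nat.factorial i : ℝ) / a ^ (i + 1) := by
  have h := Real.integral_rpow_mul_exp_neg_mul_Ioi (a := (i:ℝ) + 1) (r := a)
    (by positivity) ha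
  have heq : (fun t : ℝ => t ^ ((i:ℝ) + 1 - 1) * Real.exp (-(a * t)))
      = fun t : ℝ => t ^ i * Real.exp (-(a * t)) := by
    funext t
    rw [add_sub_cancel_right, Real.rpow_natCast]
  rw [heq] at h
  rw [h, show ((i:ℝ) + 1) = ((i + 1 : ℕ) : ℝ) by push_cast; ring, Real.rpow_natCast,
    show ((i + 1 : ℕ) : ℝ) = (i:ℝ) + 1 by push_cast; ring,
    Real.Gamma_nat_eq_factorial, div_pow, one_pow]
  ring

/-- mean first-crossing time of the iterated Poisson process through the
constant boundary `k ≥ 1`: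
`∫_0^∞ P_{k-1}(t) dt = (1/(λ(1-e^{-μ}))) [1 + Σ_{i=1}^{k-1} (i!/(e^μ-1)^i) Σ_{j=i}^{k-1} S2(j,i) μ^j/j!]`. -/
theorem stmt16 (lam mu : ℝ) (hlam : 0 < lam) (hmu : 0 < mu) (k : ℕ) (hk : 1 ≤ k) :
    ∫ t in Set.Ioi (0 : ℝ), (∑ j ∈ Finset.range k, iterP lam mu t j)
      = (1 / (lam * (1 - Real.exp (-mu)))) *
          (1 + ∑ i ∈ Finset.Icc 1 (k - 1), (Nat.factorial i : ℝ) / (Real.exp mu - 1) ^ i *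
            ∑ j ∈ Finset.Icc i (k - 1), S2 j i * mu ^ j / (Nat.factorial j : ℝ)) := by
  set a : ℝ := lam * (1 - Real.exp (-mu)) with ha_def
  set b : ℝ := lam * Real.exp (-mu) with hb_def
  have hexp_lt : Real.exp (-mu) < 1 := by
    rw [Real.exp_lt_one_iff]
    linarith
  have ha : 0 < a := by
    apply mul_pos hlam
    linarith
  have hb : 0 < b := mul_pos hlam (Real.exp_pos _)
  have hE : 0 < Real.exp mu - 1 := by
    have := Real.add_one_lt_exp (x := mu) (by positivity)
    linarith
  have hba : b * (Real.exp mu - 1) = a := by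
    rw [hb_def, ha_def, Real.exp_neg]
    have h := Real.exp_pos mu
    field_simp
  have hb_eq : b = a / (Real.exp mu - 1) := by
    field_simp [← hba]
    exact hba
  -- rewrite iterP as a finite sum of integrable pieces
  have hfun : ∀ j (t : ℝ), iterP lam mu t j
      = ∑ i ∈ Finset.range (j + 1),
          (st j i : ℝ) * (mu ^ j / (Nat.factorial j : ℝ)) * b ^ i
            * (t ^ i * Real.exp (-(a * t))) := by
    intro j t
    rw [iterP, bell_eq]
    have harg : -lam * t * (1 - Real.exp (-mu)) = -(a * t) := by rw [ha_def]; ring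
    rw [harg, Finset.mul_sum]
    refine Finset.sum_congr rfl fun i _ => ?_
    rw [hb_def]
    ring
  have hint : ∀ j ∈ Finset.range k,
      IntegrableOn (fun t : ℝ => iterP lam mu t j) (Set.Ioi 0) := by
    intro j _
    have : (fun t : ℝ => iterP lam mu t j)
        = fun t => ∑ i ∈ Finset.range (j + 1),
            (st j i : ℝ) * (mu ^ j / (Nat.factorial j : ℝ)) * b ^ i
              * (t ^ i * Real.exp (-(a * t))) := funext (hfun j)
    rw [this]
    exact integrable_finset_sum _ fun i _ => ((integrable_pow_exp ha i).const_mul _)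
  -- exchange integral and sum
  rw [MeasureTheory.integral_finset_sum _ hint]
  -- compute each integral
  have hIj : ∀ j, (∫ t in Set.Ioi (0:ℝ), iterP lam mu t j)
      = ∑ i ∈ Finset.range (j + 1),
          (st j i : ℝ) * (mu ^ j / (Nat.factorial j : ℝ)) * b ^ i
            * ((Nat.factorial i : ℝ) / a ^ (i + 1)) := by
    intro j
    have : (fun t : ℝ => iterP lam mu t j)
        = fun t => ∑ i ∈ Finset.range (j + 1),
            (st j i : ℝ) * (mu ^ j / (Nat.factorial j : ℝ)) * b ^ i
              * (t ^ i * Real.exp (-(a * t))) := funext (hfun j)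
    rw [this, MeasureTheory.integral_finset_sum _
      (fun i _ => ((integrable_pow_exp ha i).const_mul _))]
    refine Finset.sum_congr rfl fun i _ => ?_
    rw [MeasureTheory.integral_const_mul, integral_pow_exp ha i]
  rw [Finset.sum_congr rfl fun j _ => hIj j]
  -- now pure algebra: swap the double sum
  have hswap : (∑ j ∈ Finset.range k, ∑ i ∈ Finset.range (j + 1),
        (st j i : ℝ) * (mu ^ j / (Nat.factorial j : ℝ)) * b ^ i
          * ((Nat.factorial i : ℝ) / a ^ (i + 1)))
      = ∑ i ∈ Finset.range k, ∑ j ∈ Finset.Ico i k,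
          (st j i : ℝ) * (mu ^ j / (Nat.factorial j : ℝ)) * b ^ i
            * ((Nat.factorial i : ℝ) / a ^ (i + 1)) := by
    rw [Finset.range_eq_Ico, Finset.sum_Ico_Ico_comm]
    simp only [Finset.range_eq_Ico]
  rw [hswap]
  -- split off i = 0
  have hk0 : 0 < k := hk
  rw [Finset.range_eq_Ico, Finset.sum_eq_sum_Ico_succ_bot hk0]
  -- i = 0 term equals 1/a
  have hzero : (∑ j ∈ Finset.Ico 0 k,
        (st j 0 : ℝ) * (mu ^ j / (Nat.factorial j : ℝ)) * b ^ 0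
          * ((Nat.factorial 0 : ℝ) / a ^ (0 + 1))) = 1 / a := by
    rw [Finset.sum_eq_single 0]
    · simp [st, pow_one]
    · intro j _ hj
      rcases j with _ | m
      · exact absurd rfl hj
      · simp [show st (m+1) 0 = 0 from rfl]
    · intro h
      exact absurd (Finset.mem_Ico.2 ⟨Nat.zero_le 0, hk0⟩) h
  rw [hzero]
  -- the rest
  have hIcc : ∀ i, Finset.Ico i k = Finset.Icc i (k - 1) := by
    intro i
    have h2 : k - 1 + 1 = k := by omega
    conv_lhs => rw [← h2]
    rw [Finset.Ico_add_one_right_eq_Icc]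
  have hrest : (∑ i ∈ Finset.Ico 1 k, ∑ j ∈ Finset.Ico i k,
        (st j i : ℝ) * (mu ^ j / (Nat.factorial j : ℝ)) * b ^ i
          * ((Nat.factorial i : ℝ) / a ^ (i + 1)))
      = (1 / a) * ∑ i ∈ Finset.Icc 1 (k - 1), (Nat.factorial i : ℝ) / (Real.exp mu - 1) ^ i *
          ∑ j ∈ Finset.Icc i (k - 1), S2 j i * mu ^ j / (Nat.factorial j : ℝ) := by
    rw [hIcc 1, Finset.mul_sum]
    refine Finset.sum_congr rfl fun i _ => ?_
    rw [hIcc i, Finset.mul_sum, Finset.mul_sum]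
    refine Finset.sum_congr rfl fun j _ => ?_
    rw [S2_eq_st, hb_eq, div_pow]
    have hfj : (Nat.factorial j : ℝ) ≠ 0 := by exact_mod_cast Nat.factorial_ne_zero j
    field_simp
    ring
  rw [hrest]
  field_simp
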